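/- The function h1(x) = (1 + 1/x)^(x+1/2) is strictly decreasing on (0, ∞) and tends to e as x → ∞. -/

import Mathlib

open Real Filter Set

private lemma base_pos {x : ℝ} (hx : 0 < x) : 0 < 1 + 1/x := by
  have h : (0:ℝ) < 1/x := by positivity
  linarith

private lemma log_lt_aux : ∀ u : ℝ, 0 < u → Real.log (1 + u) < u * (u + 2) / (2 * (u + 1)) := by
  have key : StrictMonoOn (fun u : ℝ => u * (u + 2) / (2 * (u + 1)) - Real.log (1 + u)) (Ici 0) := by
    apply strictMonoOn_of_deriv_pos (convex_Ici 0)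
    · apply ContinuousOn.sub
      · apply ContinuousOn.div
        · fun_prop
        · fun_prop
        · intro u hu; simp only [mem_Ici] at hu; nlinarith
      · apply ContinuousOn.log (by fun_prop)
        intro u hu; simp only [mem_Ici] at hu; nlinarith
    · intro u hu
      rw [interior_Ici] at hu
      simp only [mem_Ioi] at hu
      have h1 : (2 * (u + 1)) ≠ 0 := by nlinarith
      have h2 : (1 : ℝ) + u ≠ 0 := by nlinarith
      have hd : HasDerivAt (fun u : ℝ => u * (u + 2) / (2 * (u + 1)) - Real.log (1 + u))
          (((1 * (u + 2) + u * 1) * (2 * (u + 1)) - u * (u + 2) * 2) / (2 * (u + 1)) ^ 2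
            - (0 + 1) / (1 + u)) u := by
        apply HasDerivAt.sub
        · exact ((hasDerivAt_id u).mul (by simpa using (hasDerivAt_id u).add_const 2)).div
            (by simpa using ((hasDerivAt_id u).add_const 1).const_mul 2) h1
        · exact (((hasDerivAt_const u 1).add (hasDerivAt_id u)).log h2)
      rw [hd.deriv]
      rw [div_sub_div _ _ (by positivity) h2]
      apply div_pos
      · ring_nf; nlinarith
      · positivity
  intro u hu
  have := key self_mem_Ici (le_of_lt hu : u ∈ Ici 0) hu
  simp only [add_zero, Real.log_one, zero_mul, zero_div, sub_zero] at this
  linarith [this]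

private lemma g_anti : StrictAntiOn (fun x : ℝ => (x + 1/2) * Real.log (1 + 1/x)) (Ioi 0) := by
  apply strictAntiOn_of_deriv_neg (convex_Ioi 0)
  · apply ContinuousOn.mul (by fun_prop)
    apply ContinuousOn.log
    · apply ContinuousOn.add continuousOn_const
      apply ContinuousOn.div continuousOn_const continuousOn_id
      intro x hx; exact ne_of_gt hx
    · intro x hx
      simp only [mem_Ioi] at hx
      have : 0 < 1/x := by positivity
      linarith
  · intro x hx
    rw [interior_Ioi] at hx
    simp only [mem_Ioi] at hx
    have hx0 : x ≠ 0 := ne_of_gt hx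
    have hb : 0 < 1 + 1/x := base_pos hx
    have hd' : HasDerivAt (fun x : ℝ => 1 + 1/x) (-(x^2)⁻¹) x := by
      simpa [one_div] using (hasDerivAt_inv hx0).const_add 1
    have hd : HasDerivAt (fun x : ℝ => (x + 1/2) * Real.log (1 + 1/x))
        ((1 + 0) * Real.log (1 + 1/x) + (x + 1/2) * (-(x^2)⁻¹ / (1 + 1/x))) x := by
      apply HasDerivAt.mul
      · simpa using (hasDerivAt_id x).add_const (1/2 : ℝ)
      · exact hd'.log (ne_of_gt hb)
    rw [hd.deriv]
    have hlog := log_lt_aux (1/x) (by positivity)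
    have heq : (1/x) * (1/x + 2) / (2 * (1/x + 1)) = (x + 1/2) * ((1 / x^2) / (1 + 1/x)) := by
      field_simp
      ring
    have hpos : 0 < (x + 1/2) * ((1 / x^2) / (1 + 1/x)) := by positivity
    rw [heq] at hlog
    have : (x + 1/2) * (-(x^2)⁻¹ / (1 + 1/x)) = -((x + 1/2) * ((1 / x^2) / (1 + 1/x))) := by
      ring
    rw [this]
    linarith

theorem h1_strictAnti_tendsto_e :
    StrictAntiOn (fun x : ℝ => (1 + 1 / x) ^ (x + 1 / 2)) (Set.Ioi 0) ∧
      Filter.Tendsto (fun x : ℝ => (1 + 1 / x) ^ (x + 1 / 2)) Filter.atTop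
        (nhds (Real.exp 1)) := by
  constructor
  · intro x hx y hy hxy
    simp only [mem_Ioi] at hx hy
    have hbx : 0 < 1 + 1/x := base_pos hx
    have hby : 0 < 1 + 1/y := base_pos hy
    simp only
    rw [Real.rpow_def_of_pos hbx, Real.rpow_def_of_pos hby]
    apply Real.exp_lt_exp.mpr
    have := g_anti (mem_Ioi.mpr hx) (mem_Ioi.mpr hy) hxy
    simp only at this
    linarith [this]
  · have h1 : Tendsto (fun x : ℝ => (1 + 1/x) ^ x) atTop (nhds (Real.exp 1)) := by
      simpa using tendsto_one_add_div_rpow_exp 1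
    have h2 : Tendsto (fun x : ℝ => 1 + 1/x) atTop (nhds 1) := by
      have := tendsto_inv_atTop_zero (𝕜 := ℝ)
      have := this.const_add (1 : ℝ)
      simpa [one_div] using this
    have h3 : Tendsto (fun x : ℝ => (1 + 1/x) ^ (1/2 : ℝ)) atTop (nhds 1) := by
      have := h2.rpow_const (p := 1/2) (Or.inl one_ne_zero)
      simpa using this
    have h4 := h1.mul h3
    rw [mul_one] at h4
    apply h4.congr'
    filter_upwards [eventually_gt_atTop (0:ℝ)] with x hx
    have hb : 0 < 1 + 1/x := base_pos hx
    rw [← Real.rpow_add hb]
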